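/- Let k ≥ 3 be an integer and suppose ℓ is a positive integer with 2^{k−1} < 3^ℓ < 2^k. Let (A_i)_{i=1}^{∞} be a strictly increasing sequence of positive integers with A_1 = 1 such that G = ⋃_{i=1}^{∞} (1/A_{2i}, 1/A_{2i−1}] is a k-good set and Bad(G) = ⋃_{i=1}^{∞} (1/A_{2i+1}, 1/A_{2i}]. Then 2 ≤ ℓ ≤ k−2 and A_4 = 2^k · 3^{k−1−ℓ}. -/

import Mathlib

/-- A set `G` of reals is `k`-good if it contains no geometric progression of
length `k` with integer ratio. -/
def kGood (k : ℕ) (G : Set ℝ) : Prop :=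
  ¬ ∃ (a : ℝ) (r : ℕ), 0 < a ∧ 2 ≤ r ∧ ∀ j < k, a * (r : ℝ) ^ j ∈ G

/-- `x` is `k`-bad with respect to `G` if there is an integer `r ≥ 2` with
`x * r ^ j ∈ G` for all `j ∈ {1,...,k-1}`. -/
def kBadWrt (k : ℕ) (G : Set ℝ) (x : ℝ) : Prop :=
  ∃ r : ℕ, 2 ≤ r ∧ ∀ j : ℕ, 1 ≤ j → j ≤ k - 1 → x * (r : ℝ) ^ j ∈ G

/-- `Bad k G` is the set of `x ∈ (0,1] \ G` that are `k`-bad with respect to `G`. -/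
def Bad (k : ℕ) (G : Set ℝ) : Set ℝ :=
  {x | x ∈ Set.Ioc (0 : ℝ) 1 \ G ∧ kBadWrt k G x}

private lemma two_pow_lt_three_pow : ∀ n : ℕ, 2 ^ (n + 3) < 3 ^ (n + 2) := by
  intro n
  induction n with
  | zero => norm_num
  | succ n ih =>
    have e1 : 2 ^ (n + 1 + 3) = 2 * 2 ^ (n + 3) := by ring
    have e2 : 3 ^ (n + 1 + 2) = 3 * 3 ^ (n + 2) := by ring
    rw [e1, e2]; omega

private lemma three_pow_le_two_pow : ∀ n : ℕ, 3 ^ (n + 3) ≤ 2 ^ (2 * n + 5) := by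
  intro n
  induction n with
  | zero => norm_num
  | succ n ih =>
    have e1 : 3 ^ (n + 1 + 3) = 3 * 3 ^ (n + 3) := by ring
    have e2 : 2 ^ (2 * (n + 1) + 5) = 4 * 2 ^ (2 * n + 5) := by ring
    rw [e1, e2]; omega

/-- Here `A i` denotes the term `A_{i+1}` of the paper. -/
theorem stmt_15 (k : ℕ) (hk : 3 ≤ k) (ℓ : ℕ) (hℓ : 0 < ℓ)
    (h1 : 2 ^ (k - 1) < 3 ^ ℓ) (h2 : 3 ^ ℓ < 2 ^ k)
    (A : ℕ → ℕ)
    (hpos : ∀ i, 0 < A i) (hmono : StrictMono A) (hA1 : A 0 = 1)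
    (hgood : kGood k (⋃ i : ℕ, Set.Ioc (1 / (A (2 * i + 1) : ℝ)) (1 / (A (2 * i) : ℝ))))
    (hbad : Bad k (⋃ i : ℕ, Set.Ioc (1 / (A (2 * i + 1) : ℝ)) (1 / (A (2 * i) : ℝ))) =
      ⋃ i : ℕ, Set.Ioc (1 / (A (2 * i + 2) : ℝ)) (1 / (A (2 * i + 1) : ℝ))) :
    2 ≤ ℓ ∧ ℓ ≤ k - 2 ∧ A 3 = 2 ^ k * 3 ^ (k - 1 - ℓ) := by
  -- ## Purely numerical consequences
  have hℓ2 : 2 ≤ ℓ := by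
    by_contra h
    have hℓ1 : ℓ = 1 := by omega
    subst hℓ1
    have h4 : 2 ^ 2 ≤ 2 ^ (k - 1) := Nat.pow_le_pow_right (by norm_num) (by omega)
    simp at h1
    omega
  have h2k3 : 2 ^ k < 3 ^ (k - 1) := by
    have h := two_pow_lt_three_pow (k - 3)
    have e1 : k - 3 + 3 = k := by omega
    have e2 : k - 3 + 2 = k - 1 := by omega
    rwa [e1, e2] at h
  have hℓk : ℓ ≤ k - 2 := by
    have h3 : 3 ^ ℓ < 3 ^ (k - 1) := lt_trans h2 h2k3
    have := (Nat.pow_lt_pow_iff_right (by norm_num : 1 < 3)).1 h3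
    omega
  have hk4 : 4 ≤ k := by omega
  have h3k2 : 3 ^ (k - 1) ≤ 2 ^ (2 * k - 3) := by
    have h := three_pow_le_two_pow (k - 4)
    have e1 : k - 4 + 3 = k - 1 := by omega
    have e2 : 2 * (k - 4) + 5 = 2 * k - 3 := by omega
    rwa [e1, e2] at h
  set m := k - 1 - ℓ with hmdef
  have hm1 : 1 ≤ m := by omega
  have hmℓ : m + ℓ = k - 1 := by omega
  have h3m2 : 3 ^ m < 2 ^ (k - 2) := by
    have key : 3 ^ m * 2 ^ (k - 1) < 2 ^ (k - 2) * 2 ^ (k - 1) := by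
      calc 3 ^ m * 2 ^ (k - 1) < 3 ^ m * 3 ^ ℓ :=
            mul_lt_mul_of_pos_left h1 (Nat.pow_pos (by norm_num))
        _ = 3 ^ (k - 1) := by rw [← pow_add, hmℓ]
        _ ≤ 2 ^ (2 * k - 3) := h3k2
        _ = 2 ^ (k - 2) * 2 ^ (k - 1) := by rw [← pow_add]; congr 1; omega
    exact Nat.lt_of_mul_lt_mul_right key
  -- ## Setup
  set G : Set ℝ := ⋃ i : ℕ, Set.Ioc (1 / (A (2 * i + 1) : ℝ)) (1 / (A (2 * i) : ℝ)) with hGdef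
  have hAr : ∀ n, (0 : ℝ) < (A n : ℝ) := fun n => by exact_mod_cast hpos n
  have hAr1 : ∀ n, (1 : ℝ) ≤ (A n : ℝ) := fun n => by exact_mod_cast hpos n
  have hGmem : ∀ y : ℝ, y ∈ G ↔ ∃ i, 1 / (A (2 * i + 1) : ℝ) < y ∧ y ≤ 1 / (A (2 * i) : ℝ) := by
    intro y; rw [hGdef]; simp [Set.mem_iUnion, Set.mem_Ioc]
  have hGle1 : ∀ y ∈ G, y ≤ 1 := by
    intro y hy
    obtain ⟨i, _, hr⟩ := (hGmem y).1 hy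
    refine hr.trans ?_
    rw [div_le_one (hAr _)]
    exact hAr1 _
  have hBmem : ∀ y : ℝ, y ∈ Bad k G ↔
      ∃ i, 1 / (A (2 * i + 2) : ℝ) < y ∧ y ≤ 1 / (A (2 * i + 1) : ℝ) := by
    intro y; rw [hbad]; simp [Set.mem_iUnion, Set.mem_Ioc]
  -- ## Step 1 : A 1 = 2 ^ (k - 1)
  have hA1le : A 1 ≤ 2 ^ (k - 1) := by
    by_contra hc
    push_neg at hc
    refine hgood ⟨1 / (2 ^ (k - 1) : ℝ), 2, by positivity, le_rfl, ?_⟩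
    intro j hj
    rw [hGmem]
    refine ⟨0, ?_, ?_⟩
    · have hA1lt : (1 : ℝ) / (A (2 * 0 + 1) : ℝ) < 1 / (2 ^ (k - 1) : ℝ) := by
        rw [one_div_lt_one_div (hAr _) (by positivity)]
        exact_mod_cast hc
      refine hA1lt.trans_le ?_
      nth_rewrite 1 [← mul_one (1 / (2 ^ (k - 1) : ℝ))]
      push_cast
      exact mul_le_mul_of_nonneg_left (one_le_pow₀ one_le_two) (by positivity)
    · have hA0 : (A (2 * 0) : ℝ) = 1 := by norm_num [hA1]
      rw [hA0, div_one, div_mul_eq_mul_div, div_le_one (by positivity), one_mul]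
      calc ((2:ℕ):ℝ) ^ j ≤ (2:ℝ) ^ (k - 1) := by
            push_cast
            exact pow_le_pow_right₀ one_le_two (by omega)
        _ = (2 ^ (k-1) : ℝ) := by norm_num
  have hA1ge : 2 ^ (k - 1) ≤ A 1 := by
    have hbp : (1 / (A 1 : ℝ)) ∈ Bad k G := by
      rw [hBmem]
      refine ⟨0, ?_, le_rfl⟩
      rw [one_div_lt_one_div (hAr _) (hAr _)]
      exact_mod_cast hmono (by norm_num : (1:ℕ) < 2 * 0 + 2)
    obtain ⟨-, r, hr2, hrj⟩ := hbp
    have hterm := hGle1 _ (hrj (k - 1) (by omega) le_rfl)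
    have hrpow : r ^ (k - 1) ≤ A 1 := by
      have : (r : ℝ) ^ (k - 1) ≤ (A 1 : ℝ) := by
        rw [div_mul_eq_mul_div, div_le_one (hAr _), one_mul] at hterm
        exact hterm
      exact_mod_cast this
    have hr2' : r = 2 := by
      by_contra h
      have h3 : 3 ≤ r := by omega
      have h31 : 3 ^ (k - 1) ≤ r ^ (k - 1) := Nat.pow_le_pow_left h3 _
      have h23 : 2 ^ (k - 1) < 3 ^ (k - 1) := Nat.pow_lt_pow_left (by norm_num) (by omega)
      omega
    subst hr2'
    exact hrpow
  have hA1eq : A 1 = 2 ^ (k - 1) := le_antisymm hA1le hA1ge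
  have hA1r : (A 1 : ℝ) = 2 ^ (k - 1) := by rw [hA1eq]; push_cast; ring
  have hfirst : ∀ y : ℝ, 1 / (2 ^ (k - 1) : ℝ) < y → y ≤ 1 → y ∈ G := by
    intro y hy1 hy2
    rw [hGmem]
    refine ⟨0, ?_, ?_⟩
    · rwa [show ((A (2 * 0 + 1) : ℝ)) = 2 ^ (k - 1) from hA1r]
    · rw [show ((A (2 * 0) : ℝ)) = 1 by norm_num [hA1]]
      simpa using hy2
  have heq2 : (1 : ℝ) / (2 ^ k : ℝ) * 2 = 1 / (2 ^ (k - 1) : ℝ) := by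
    have h2k : (2 : ℝ) ^ k = 2 * 2 ^ (k - 1) := by
      rw [← pow_succ']; congr 1; omega
    rw [h2k]
    field_simp
  -- ## Step 2 : A 2 = 2 ^ k
  have hA2ge : 2 ^ k ≤ A 2 := by
    by_contra hc
    push_neg at hc
    have hxlo : 1 / (2 ^ k : ℝ) < 1 / (A 2 : ℝ) := by
      rw [one_div_lt_one_div (by positivity) (hAr _)]
      exact_mod_cast hc
    have hxhi : 1 / (A 2 : ℝ) < 1 / (2 ^ (k - 1) : ℝ) := by
      rw [one_div_lt_one_div (hAr _) (by positivity), ← hA1r]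
      exact_mod_cast hmono (by norm_num : (1:ℕ) < 2)
    have hup : ∀ j : ℕ, 1 ≤ j → j ≤ k - 1 → 1 / (A 2 : ℝ) * ((2:ℕ) : ℝ) ^ j ∈ G := by
      intro j hj1 hj2
      apply hfirst
      · calc 1 / (2 ^ (k - 1) : ℝ) = 1 / (2 ^ k : ℝ) * 2 := heq2.symm
          _ < 1 / (A 2 : ℝ) * 2 := by
              exact mul_lt_mul_of_pos_right hxlo (by norm_num)
          _ ≤ 1 / (A 2 : ℝ) * ((2:ℕ) : ℝ) ^ j := by
              push_cast
              nth_rewrite 1 [show (2:ℝ) = 2 ^ 1 by norm_num]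
              exact mul_le_mul_of_nonneg_left (pow_le_pow_right₀ one_le_two hj1) (by positivity)
      · calc 1 / (A 2 : ℝ) * ((2:ℕ) : ℝ) ^ j
            ≤ 1 / (2 ^ (k - 1) : ℝ) * (2 : ℝ) ^ (k - 1) := by
              push_cast
              apply mul_le_mul (le_of_lt hxhi)
                (pow_le_pow_right₀ one_le_two (by omega)) (by positivity) (by positivity)
          _ = 1 := by field_simp
    have hxG : (1 / (A 2 : ℝ)) ∉ G := by
      intro hmemx
      refine hgood ⟨1 / (A 2 : ℝ), 2, one_div_pos.2 (hAr _), le_rfl, ?_⟩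
      intro j hj
      rcases Nat.eq_zero_or_pos j with rfl | hj1
      · simpa using hmemx
      · exact hup j hj1 (by omega)
    have hxBad : (1 / (A 2 : ℝ)) ∈ Bad k G := by
      refine ⟨⟨⟨one_div_pos.2 (hAr _), ?_⟩, hxG⟩, 2, le_rfl, hup⟩
      rw [div_le_one (hAr _)]
      exact hAr1 _
    rw [hBmem] at hxBad
    obtain ⟨i, hlo, hhi⟩ := hxBad
    have h21 : A (2 * i + 1) ≤ A 2 := by
      exact_mod_cast (one_div_le_one_div (hAr _) (hAr _)).1 hhi
    have hi0 : i = 0 := by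
      have := hmono.le_iff_le.1 h21
      omega
    subst hi0
    exact absurd hlo (lt_irrefl _)
  have hA2le : A 2 ≤ 2 ^ k := by
    by_contra hc
    push_neg at hc
    have hxBad : (1 / (2 ^ k : ℝ)) ∈ Bad k G := by
      rw [hBmem]
      refine ⟨0, ?_, ?_⟩
      · rw [one_div_lt_one_div (hAr _) (by positivity)]
        exact_mod_cast hc
      · rw [show ((A (2 * 0 + 1) : ℝ)) = 2 ^ (k - 1) from hA1r,
          one_div_le_one_div (by positivity) (by positivity)]
        exact pow_le_pow_right₀ one_le_two (by omega)
    obtain ⟨-, r, hr2, hrj⟩ := hxBad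
    have hterm := hGle1 _ (hrj (k - 1) (by omega) le_rfl)
    have hrn : r ^ (k - 1) ≤ 2 ^ k := by
      have : (r : ℝ) ^ (k - 1) ≤ (2 ^ k : ℝ) := by
        rw [div_mul_eq_mul_div, div_le_one (by positivity), one_mul] at hterm
        exact hterm
      exact_mod_cast this
    have hr2' : r = 2 := by
      by_contra h
      have h3 : 3 ≤ r := by omega
      have h31 : 3 ^ (k - 1) ≤ r ^ (k - 1) := Nat.pow_le_pow_left h3 _
      omega
    subst hr2'
    have h1t := hrj 1 le_rfl (by omega)
    have heqq : 1 / (2 ^ k : ℝ) * ((2:ℕ) : ℝ) ^ 1 = 1 / (2 ^ (k - 1) : ℝ) := by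
      push_cast
      rw [pow_one]
      exact heq2
    rw [heqq] at h1t
    obtain ⟨i, hlo, hhi⟩ := (hGmem _).1 h1t
    rcases Nat.eq_zero_or_pos i with rfl | hi
    · rw [show ((A (2 * 0 + 1) : ℝ)) = 2 ^ (k - 1) from hA1r] at hlo
      exact absurd hlo (lt_irrefl _)
    · have hA2i : A 2 ≤ A (2 * i) := hmono.le_iff_le.2 (by omega)
      have hlt : (1 : ℝ) / (A (2 * i) : ℝ) < 1 / (2 ^ (k - 1) : ℝ) := by
        rw [one_div_lt_one_div (hAr _) (by positivity)]
        have hnat : 2 ^ (k - 1) < A (2 * i) := by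
          have : 2 ^ (k - 1) < 2 ^ k := Nat.pow_lt_pow_right (by norm_num) (by omega)
          omega
        exact_mod_cast hnat
      exact absurd (hhi.trans_lt hlt) (lt_irrefl _)
  have hA2eq : A 2 = 2 ^ k := le_antisymm hA2le hA2ge
  have hA2r : (A 2 : ℝ) = 2 ^ k := by rw [hA2eq]; push_cast; ring
  -- ## The gap (1/2^k, 1/2^(k-1)] is disjoint from G
  have hgap : ∀ y ∈ G, y ≤ 1 / (2 ^ k : ℝ) ∨ 1 / (2 ^ (k - 1) : ℝ) < y := by
    intro y hy
    obtain ⟨i, hlo, hhi⟩ := (hGmem y).1 hy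
    rcases Nat.eq_zero_or_pos i with rfl | hi
    · right
      rwa [show ((A (2 * 0 + 1) : ℝ)) = 2 ^ (k - 1) from hA1r] at hlo
    · left
      refine hhi.trans ?_
      rw [one_div_le_one_div (hAr _) (by positivity)]
      have : A 2 ≤ A (2 * i) := hmono.le_iff_le.2 (by omega)
      rw [hA2eq] at this
      exact_mod_cast this
  -- ## Step 3 : A 3 = 2 ^ k * 3 ^ m
  have hNpos : (0 : ℝ) < (2 : ℝ) ^ k * 3 ^ m := by positivity
  have hNcast : ((2 ^ k * 3 ^ m : ℕ) : ℝ) = (2 : ℝ) ^ k * 3 ^ m := by push_cast; ring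
  have h3mr : (3 : ℝ) ^ m < 2 ^ (k - 1) := by
    have : (3 : ℕ) ^ m < 2 ^ (k - 1) := by
      have : 2 ^ (k - 2) ≤ 2 ^ (k - 1) := Nat.pow_le_pow_right (by norm_num) (by omega)
      omega
    exact_mod_cast this
  have hA3le : A 3 ≤ 2 ^ k * 3 ^ m := by
    by_contra hc
    push_neg at hc
    refine hgood ⟨1 / ((2 : ℝ) ^ k * 3 ^ m), 3, by positivity, by norm_num, ?_⟩
    intro j hj
    rcases le_or_gt j m with hjm | hjm
    · rw [hGmem]
      refine ⟨1, ?_, ?_⟩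
      · have step1 : (1 : ℝ) / (A (2 * 1 + 1) : ℝ) < 1 / ((2 : ℝ) ^ k * 3 ^ m) := by
          rw [one_div_lt_one_div (hAr _) hNpos, ← hNcast]
          exact_mod_cast hc
        refine step1.trans_le ?_
        nth_rewrite 1 [← mul_one (1 / ((2 : ℝ) ^ k * 3 ^ m))]
        push_cast
        exact mul_le_mul_of_nonneg_left (one_le_pow₀ (by norm_num)) (by positivity)
      · rw [show ((A (2 * 1) : ℝ)) = 2 ^ k from hA2r]
        rw [div_mul_eq_mul_div, div_le_div_iff₀ hNpos (by positivity), one_mul]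
        push_cast
        have h3jm : (3 : ℝ) ^ j ≤ 3 ^ m := pow_le_pow_right₀ (by norm_num) hjm
        nlinarith [pow_pos (show (0:ℝ) < 2 by norm_num) k]
    · apply hfirst
      · have h3j : (3 : ℝ) ^ (m + 1) ≤ (3 : ℝ) ^ j :=
          pow_le_pow_right₀ (by norm_num) (by omega)
        have key : 1 / ((2 : ℝ) ^ k * 3 ^ m) * 3 ^ (m + 1) = 3 / (2 ^ k : ℝ) := by
          rw [pow_succ]
          field_simp
        calc 1 / (2 ^ (k - 1) : ℝ) = 2 / (2 ^ k : ℝ) := by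
              rw [← heq2]; ring
          _ < 3 / (2 ^ k : ℝ) := by gcongr; norm_num
          _ = 1 / ((2 : ℝ) ^ k * 3 ^ m) * 3 ^ (m + 1) := key.symm
          _ ≤ 1 / ((2 : ℝ) ^ k * 3 ^ m) * ((3:ℕ) : ℝ) ^ j := by
              push_cast
              gcongr
      · have hjle : j ≤ m + ℓ := by omega
        have h3j : ((3:ℕ) : ℝ) ^ j ≤ 3 ^ m * 3 ^ ℓ := by
          push_cast
          rw [← pow_add]
          exact pow_le_pow_right₀ (by norm_num) hjle
        calc 1 / ((2 : ℝ) ^ k * 3 ^ m) * ((3:ℕ) : ℝ) ^ j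
            ≤ 1 / ((2 : ℝ) ^ k * 3 ^ m) * ((3:ℝ) ^ m * 3 ^ ℓ) := by
              gcongr
          _ = (3 : ℝ) ^ ℓ / 2 ^ k := by
              field_simp
          _ ≤ 1 := by
              rw [div_le_one (by positivity)]
              exact_mod_cast le_of_lt h2
  have hA3ge : 2 ^ k * 3 ^ m ≤ A 3 := by
    by_contra hc
    push_neg at hc
    have hxBad : (1 / (A 3 : ℝ)) ∈ Bad k G := by
      rw [hBmem]
      refine ⟨1, ?_, le_rfl⟩
      rw [one_div_lt_one_div (hAr _) (hAr _)]
      exact_mod_cast hmono (by norm_num : (3:ℕ) < 2 * 1 + 2)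
    obtain ⟨-, r, hr2, hrj⟩ := hxBad
    have hxlo : 1 / ((2 : ℝ) ^ k * 3 ^ m) < 1 / (A 3 : ℝ) := by
      rw [one_div_lt_one_div hNpos (hAr _), ← hNcast]
      exact_mod_cast hc
    have hxhi : 1 / (A 3 : ℝ) < 1 / (2 ^ k : ℝ) := by
      rw [one_div_lt_one_div (hAr _) (by positivity), ← hA2r]
      exact_mod_cast hmono (by norm_num : (2:ℕ) < 3)
    have hterm := hGle1 _ (hrj (k - 1) (by omega) le_rfl)
    have hrNn : r ^ (k - 1) ≤ A 3 := by
      have : (r : ℝ) ^ (k - 1) ≤ (A 3 : ℝ) := by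
        rw [div_mul_eq_mul_div, div_le_one (hAr _), one_mul] at hterm
        exact hterm
      exact_mod_cast this
    have hrlt : r ^ (k - 1) < 2 ^ k * 3 ^ m := lt_of_le_of_lt hrNn hc
    have hrle3 : r ≤ 3 := by
      by_contra h
      have h4 : 4 ≤ r := by omega
      have h41 : 4 ^ (k - 1) ≤ r ^ (k - 1) := Nat.pow_le_pow_left h4 _
      have h42 : (4 : ℕ) ^ (k - 1) = 2 ^ (k - 2) * 2 ^ k := by
        rw [show (4:ℕ) = 2 ^ 2 by norm_num, ← pow_mul, ← pow_add]
        congr 1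
        omega
      have h43 : 2 ^ k * 3 ^ m < 2 ^ (k - 2) * 2 ^ k := by
        rw [mul_comm (2 ^ (k - 2))]
        exact mul_lt_mul_of_pos_left h3m2 (Nat.pow_pos (by norm_num))
      omega
    interval_cases r
    · -- ratio 2 is impossible
      have hP : ∀ j : ℕ, 1 ≤ j → j ≤ k - 1 → 1 / (A 3 : ℝ) * ((2:ℕ) : ℝ) ^ j ≤ 1 / (2 ^ k : ℝ) := by
        intro j
        induction j with
        | zero => intro h _; exact absurd h (by norm_num)
        | succ n ih =>
          intro h1n hnk
          have hmem := hrj (n + 1) (by omega) hnk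
          have hlt : 1 / (A 3 : ℝ) * ((2:ℕ) : ℝ) ^ (n + 1) ≤ 1 / (2 ^ (k - 1) : ℝ) := by
            rcases Nat.eq_zero_or_pos n with rfl | hn1
            · push_cast
              rw [pow_one, ← heq2]
              exact le_of_lt (mul_lt_mul_of_pos_right hxhi (by norm_num))
            · have hprev := ih (by omega) (by omega)
              push_cast at hprev ⊢
              calc 1 / (A 3 : ℝ) * (2:ℝ) ^ (n + 1) = (1 / (A 3 : ℝ) * 2 ^ n) * 2 := by ring
                _ ≤ 1 / (2 ^ k : ℝ) * 2 := by
                    exact mul_le_mul_of_nonneg_right hprev (by norm_num)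
                _ = 1 / (2 ^ (k - 1) : ℝ) := heq2
          rcases hgap _ hmem with h | h
          · exact h
          · exact absurd h (not_lt.2 hlt)
      have hfin := hP (k - 1) (by omega) le_rfl
      have hcontra : 1 / (2 ^ k : ℝ) < 1 / (A 3 : ℝ) * ((2:ℕ) : ℝ) ^ (k - 1) := by
        push_cast
        calc (1 : ℝ) / (2 ^ k : ℝ) = 1 / ((2:ℝ) ^ k * 2 ^ (k - 1)) * 2 ^ (k - 1) := by
              field_simp
          _ < 1 / ((2:ℝ) ^ k * 3 ^ m) * 2 ^ (k - 1) := by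
              gcongr
          _ < 1 / (A 3 : ℝ) * 2 ^ (k - 1) := by
              exact mul_lt_mul_of_pos_right hxlo (by positivity)
      linarith
    · -- ratio 3 is impossible
      have hmem := hrj m hm1 (by omega)
      have hy1 := hGle1 _ (hrj (k - 1) (by omega) le_rfl)
      have hx3 : 1 / (A 3 : ℝ) ≤ 1 / ((3:ℝ) ^ (k - 1)) := by
        rw [div_mul_eq_mul_div, div_le_one (hAr _), one_mul] at hy1
        rw [one_div_le_one_div (hAr _) (by positivity)]
        exact_mod_cast hy1
      have hy_lo : 1 / (2 ^ k : ℝ) < 1 / (A 3 : ℝ) * ((3:ℕ) : ℝ) ^ m := by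
        push_cast
        calc (1 : ℝ) / (2 ^ k : ℝ) = 1 / ((2:ℝ) ^ k * 3 ^ m) * 3 ^ m := by
              field_simp
          _ < 1 / (A 3 : ℝ) * 3 ^ m := mul_lt_mul_of_pos_right hxlo (by positivity)
      have hy_hi : 1 / (A 3 : ℝ) * ((3:ℕ) : ℝ) ^ m < 1 / (2 ^ (k - 1) : ℝ) := by
        push_cast
        have e3 : (3 : ℝ) ^ (k - 1) = 3 ^ m * 3 ^ ℓ := by rw [← pow_add, hmℓ]
        have step : 1 / (A 3 : ℝ) * (3:ℝ) ^ m ≤ 1 / (3:ℝ) ^ ℓ := by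
          calc 1 / (A 3 : ℝ) * (3:ℝ) ^ m ≤ 1 / ((3:ℝ) ^ (k - 1)) * 3 ^ m :=
                mul_le_mul_of_nonneg_right hx3 (by positivity)
            _ = 1 / (3:ℝ) ^ ℓ := by
                rw [e3]
                field_simp
        have hlt2 : (1 : ℝ) / (3:ℝ) ^ ℓ < 1 / (2 ^ (k - 1) : ℝ) := by
          rw [one_div_lt_one_div (by positivity) (by positivity)]
          exact_mod_cast h1
        linarith
      rcases hgap _ hmem with h | h
      · exact absurd hy_lo (not_lt.2 h)
      · exact absurd h (not_lt.2 (le_of_lt hy_hi))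
  exact ⟨hℓ2, hℓk, le_antisymm hA3le hA3ge⟩
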